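/- The constants 3 and 2 in the median-distance upper bounds are tight on the real line: for every ε > 0 and every even k ≥ 4, (i) there exist a multiset W ⊂ ℝ of size k and w_opt ∈ ℝ with Δ_W(w_opt, γ) ≤ ε for some γ > 0, such that some y ∈ argmin_{w∈W} Δ_W(w,0) satisfies |w_opt − y| = 3ε; and (ii) there exist a multiset W' ⊂ ℝ of size k and w_opt' ∈ ℝ with Δ_{W'}(w_opt', γ') ≤ ε for some γ' > 0, such that some ȳ ∈ argmin_{w∈ℝ} Δ_{W'}(w,0) satisfies |w_opt' − ȳ| = 2ε. -/

import Mathlib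

open scoped Classical

/-- `Delta w x α` is Δ_W(x, α) on the real line: the minimal `r ≥ 0` such that the number
of points of the multiset `W = {w 1, …, w k}` within distance `r` of `x` exceeds
`k (1/2 + α)`. -/
noncomputable def Delta {k : ℕ} (w : Fin k → ℝ) (x : ℝ) (α : ℝ) : ℝ :=
  sInf {r : ℝ | 0 ≤ r ∧
    (k : ℝ) * (1 / 2 + α) < ((Finset.univ.filter fun i => |x - w i| ≤ r).card : ℝ)}

noncomputable def Wex (ε : ℝ) (m k : ℕ) : Fin k → ℝ :=
  fun i => if (i : ℕ) = 0 then -ε else if (i : ℕ) ≤ m then ε else 3*ε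

lemma count_aux (ε x r : ℝ) (k m : ℕ) (hk : k = 2*m) (hm : 2 ≤ m) :
    (Finset.univ.filter fun i : Fin k =>
      |x - (if (i : ℕ) = 0 then -ε else if (i : ℕ) ≤ m then ε else 3*ε)| ≤ r).card =
    (if |x - (-ε)| ≤ r then 1 else 0) + (if |x - ε| ≤ r then m else 0) +
      (if |x - 3*ε| ≤ r then m - 1 else 0) := by
  subst hk
  rw [Finset.card_filter]
  rw [Fin.sum_univ_eq_sum_range
    (fun n => if |x - (if n = 0 then -ε else if n ≤ m then ε else 3*ε)| ≤ r then 1 else 0)]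
  rw [Finset.range_eq_Ico,
    ← Finset.sum_Ico_consecutive _ (by omega : 0 ≤ m+1) (by omega : m+1 ≤ 2*m),
    ← Finset.sum_Ico_consecutive _ (by omega : (0:ℕ) ≤ 1) (by omega : 1 ≤ m+1)]
  have e1 : (∑ n ∈ Finset.Ico 0 1,
      if |x - (if n = 0 then -ε else if n ≤ m then ε else 3*ε)| ≤ r then 1 else 0)
      = (if |x - (-ε)| ≤ r then 1 else 0) := by
    rw [show Finset.Ico 0 1 = {0} from rfl, Finset.sum_singleton, if_pos rfl]
  have e2 : (∑ n ∈ Finset.Ico 1 (m+1),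
      if |x - (if n = 0 then -ε else if n ≤ m then ε else 3*ε)| ≤ r then 1 else 0)
      = (if |x - ε| ≤ r then m else 0) := by
    have h : ∀ n ∈ Finset.Ico 1 (m+1),
        (if |x - (if n = 0 then -ε else if n ≤ m then ε else 3*ε)| ≤ r then 1 else 0)
        = (if |x - ε| ≤ r then 1 else 0) := by
      intro n hn
      rw [Finset.mem_Ico] at hn
      rw [if_neg (show ¬ n = 0 by omega), if_pos (show n ≤ m by omega)]
    rw [Finset.sum_congr rfl h, Finset.sum_const, Nat.card_Ico, Nat.add_sub_cancel,
      smul_eq_mul]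
    split <;> simp
  have e3 : (∑ n ∈ Finset.Ico (m+1) (2*m),
      if |x - (if n = 0 then -ε else if n ≤ m then ε else 3*ε)| ≤ r then 1 else 0)
      = (if |x - 3*ε| ≤ r then m - 1 else 0) := by
    have h : ∀ n ∈ Finset.Ico (m+1) (2*m),
        (if |x - (if n = 0 then -ε else if n ≤ m then ε else 3*ε)| ≤ r then 1 else 0)
        = (if |x - 3*ε| ≤ r then 1 else 0) := by
      intro n hn
      rw [Finset.mem_Ico] at hn
      rw [if_neg (show ¬ n = 0 by omega), if_neg (show ¬ n ≤ m by omega)]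
    rw [Finset.sum_congr rfl h, Finset.sum_const, Nat.card_Ico,
      show 2*m - (m+1) = m - 1 from by omega, smul_eq_mul]
    split <;> simp
  rw [e1, e2, e3]

lemma card_W (ε x r : ℝ) (k m : ℕ) (hk : k = 2*m) (hm : 2 ≤ m) :
    (Finset.univ.filter fun i => |x - Wex ε m k i| ≤ r).card =
    (if |x - (-ε)| ≤ r then 1 else 0) + (if |x - ε| ≤ r then m else 0) +
      (if |x - 3*ε| ≤ r then m - 1 else 0) :=
  count_aux ε x r k m hk hm

lemma delta_le (ε x r α : ℝ) (k m : ℕ) (hk : k = 2*m) (hm : 2 ≤ m) (h0 : 0 ≤ r)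
    (hcard : (k:ℝ)*(1/2+α) <
      (((if |x - (-ε)| ≤ r then 1 else 0) + (if |x - ε| ≤ r then m else 0) +
        (if |x - 3*ε| ≤ r then m - 1 else 0) : ℕ) : ℝ)) :
    Delta (Wex ε m k) x α ≤ r := by
  apply csInf_le ⟨0, fun s hs => hs.1⟩
  exact ⟨h0, by rw [card_W ε x r k m hk hm]; exact_mod_cast hcard⟩

lemma delta_ge (ε x b : ℝ) (hε : 0 < ε) (k m : ℕ) (hk : k = 2*m) (hm : 2 ≤ m)
    (hb : ∀ r : ℝ, 0 ≤ r → r < b →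
      (((if |x - (-ε)| ≤ r then 1 else 0) + (if |x - ε| ≤ r then m else 0) +
        (if |x - 3*ε| ≤ r then m - 1 else 0) : ℕ) : ℝ) ≤ (k:ℝ)*(1/2+0)) :
    b ≤ Delta (Wex ε m k) x 0 := by
  have hmr : (2:ℝ) ≤ (m:ℝ) := by exact_mod_cast hm
  have hkr : (k:ℝ) = 2*(m:ℝ) := by rw [hk]; push_cast; ring
  apply le_csInf
  · refine ⟨|x| + 3*ε, by positivity, ?_⟩
    rw [card_W ε x _ k m hk hm]
    have hx1 := neg_abs_le x
    have hx2 := le_abs_self x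
    have c1 : |x - (-ε)| ≤ |x| + 3*ε := by rw [abs_le]; constructor <;> linarith
    have c2 : |x - ε| ≤ |x| + 3*ε := by rw [abs_le]; constructor <;> linarith
    have c3 : |x - 3*ε| ≤ |x| + 3*ε := by rw [abs_le]; constructor <;> linarith
    rw [if_pos c1, if_pos c2, if_pos c3]
    push_cast [Nat.cast_sub (show 1 ≤ m by omega)]
    linarith
  · rintro r ⟨hr0, hrc⟩
    by_contra hlt
    push_neg at hlt
    rw [card_W ε x r k m hk hm] at hrc
    have := hb r hr0 hlt
    push_cast at hrc this ⊢
    linarith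

/-- **Theorem 18, tightness.**  The constants `3` and `2` in the median-distance upper
bounds are tight on the real line: for every `ε > 0` and every even `k ≥ 4`,
(i) there are a multiset `W ⊆ ℝ` of size `k` and `wopt ∈ ℝ` with `Δ_W(wopt, γ) ≤ ε` for
some `γ > 0`, such that some `y ∈ argmin_{w ∈ W} Δ_W(w, 0)` satisfies `|wopt - y| = 3ε`;
(ii) there are a multiset `W' ⊆ ℝ` of size `k` and `wopt' ∈ ℝ` with `Δ_{W'}(wopt', γ') ≤ ε`
for some `γ' > 0`, such that some `ȳ ∈ argmin_{w ∈ ℝ} Δ_{W'}(w, 0)` satisfies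
`|wopt' - ȳ| = 2ε`. -/
theorem stmt13 (ε : ℝ) (hε : 0 < ε) (k : ℕ) (hk : 4 ≤ k) (hke : Even k) :
    (∃ (w : Fin k → ℝ) (wopt γ : ℝ), 0 < γ ∧ Delta w wopt γ ≤ ε ∧
      ∃ iy : Fin k, (∀ i, Delta w (w iy) 0 ≤ Delta w (w i) 0) ∧
        |wopt - w iy| = 3 * ε) ∧
    (∃ (w' : Fin k → ℝ) (wopt' γ' : ℝ), 0 < γ' ∧ Delta w' wopt' γ' ≤ ε ∧
      ∃ ybar : ℝ, (∀ x : ℝ, Delta w' ybar 0 ≤ Delta w' x 0) ∧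
        |wopt' - ybar| = 2 * ε) := by
  obtain ⟨m, hm⟩ := hke
  have hk2 : k = 2*m := by omega
  have hm2 : 2 ≤ m := by omega
  have hmr : (2:ℝ) ≤ (m:ℝ) := by exact_mod_cast hm2
  have hkr : (k:ℝ) = 2*(m:ℝ) := by rw [hk2]; push_cast; ring
  have hγ : (0:ℝ) < 1/(2*k) := by
    have : (0:ℝ) < (k:ℝ) := by linarith
    positivity
  -- Delta at wopt = 0 with γ = 1/(2k) is at most ε
  have hopt : Delta (Wex ε m k) 0 (1/(2*(k:ℝ))) ≤ ε := by
    apply delta_le ε 0 ε _ k m hk2 hm2 hε.le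
    have c1 : |(0:ℝ) - (-ε)| ≤ ε := by rw [abs_le]; constructor <;> linarith
    have c2 : |(0:ℝ) - ε| ≤ ε := by rw [abs_le]; constructor <;> linarith
    have c3 : ¬ |(0:ℝ) - 3*ε| ≤ ε := by rw [abs_le]; push_neg; intro h; linarith
    rw [if_pos c1, if_pos c2, if_neg c3]
    have hkne : (k:ℝ) ≠ 0 := by linarith
    have : (k:ℝ)*(1/2 + 1/(2*(k:ℝ))) = (m:ℝ) + 1/2 := by
      rw [hkr]
      have hm0 : (m:ℝ) ≠ 0 := by linarith
      field_simp
    rw [this]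
    push_cast
    linarith
  constructor
  · -- part (i)
    refine ⟨Wex ε m k, 0, 1/(2*(k:ℝ)), hγ, hopt, ⟨m+1, by omega⟩, ?_, ?_⟩
    · have hy : Wex ε m k ⟨m+1, by omega⟩ = 3*ε := by
        show (if (m+1) = 0 then -ε else if m+1 ≤ m then ε else 3*ε) = 3*ε
        rw [if_neg (by omega), if_neg (by omega)]
      rw [hy]
      intro i
      have hup : Delta (Wex ε m k) (3*ε) 0 ≤ 2*ε := by
        apply delta_le ε _ _ _ k m hk2 hm2 (by linarith)
        have c1 : ¬ |3*ε - (-ε)| ≤ 2*ε := by rw [abs_le]; push_neg; intro h; linarith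
        have c2 : |3*ε - ε| ≤ 2*ε := by rw [abs_le]; constructor <;> linarith
        have c3 : |3*ε - 3*ε| ≤ 2*ε := by rw [abs_le]; constructor <;> linarith
        rw [if_neg c1, if_pos c2, if_pos c3]
        push_cast [Nat.cast_sub (show 1 ≤ m by omega)]
        linarith
      have hlo : 2*ε ≤ Delta (Wex ε m k) (Wex ε m k i) 0 := by
        have hcases : Wex ε m k i = -ε ∨ Wex ε m k i = ε ∨ Wex ε m k i = 3*ε := by
          unfold Wex
          split
          · exact Or.inl rfl
          · split
            · exact Or.inr (Or.inl rfl)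
            · exact Or.inr (Or.inr rfl)
        rcases hcases with h | h | h <;> rw [h] <;>
          apply delta_ge ε _ _ hε k m hk2 hm2 <;> intro r hr0 hrb
        · have c2 : ¬ |-ε - ε| ≤ r := by rw [abs_le]; push_neg; intro h'; linarith
          have c3 : ¬ |-ε - 3*ε| ≤ r := by rw [abs_le]; push_neg; intro h'; linarith
          rw [if_neg c2, if_neg c3]
          push_cast
          split <;> linarith
        · have c1 : ¬ |ε - (-ε)| ≤ r := by rw [abs_le]; push_neg; intro h'; linarith
          have c3 : ¬ |ε - 3*ε| ≤ r := by rw [abs_le]; push_neg; intro h'; linarith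
          rw [if_neg c1, if_neg c3]
          push_cast
          split <;> linarith
        · have c1 : ¬ |3*ε - (-ε)| ≤ r := by rw [abs_le]; push_neg; intro h'; linarith
          have c2 : ¬ |3*ε - ε| ≤ r := by rw [abs_le]; push_neg; intro h'; linarith
          rw [if_neg c1, if_neg c2]
          push_cast [Nat.cast_sub (show 1 ≤ m by omega)]
          split <;> linarith
      linarith
    · have hy : Wex ε m k ⟨m+1, by omega⟩ = 3*ε := by
        show (if (m+1) = 0 then -ε else if m+1 ≤ m then ε else 3*ε) = 3*ε
        rw [if_neg (by omega), if_neg (by omega)]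
      rw [hy, zero_sub, abs_neg, abs_of_pos (by linarith)]
  · -- part (ii)
    refine ⟨Wex ε m k, 0, 1/(2*(k:ℝ)), hγ, hopt, 2*ε, ?_, ?_⟩
    · intro x
      have hup : Delta (Wex ε m k) (2*ε) 0 ≤ ε := by
        apply delta_le ε _ _ _ k m hk2 hm2 hε.le
        have c1 : ¬ |2*ε - (-ε)| ≤ ε := by rw [abs_le]; push_neg; intro h'; linarith
        have c2 : |2*ε - ε| ≤ ε := by rw [abs_le]; constructor <;> linarith
        have c3 : |2*ε - 3*ε| ≤ ε := by rw [abs_le]; constructor <;> linarith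
        rw [if_neg c1, if_pos c2, if_pos c3]
        push_cast [Nat.cast_sub (show 1 ≤ m by omega)]
        linarith
      have hlo : ε ≤ Delta (Wex ε m k) x 0 := by
        apply delta_ge ε _ _ hε k m hk2 hm2
        intro r hr0 hrb
        by_cases h2 : |x - ε| ≤ r
        · rw [abs_le] at h2
          have c1 : ¬ |x - (-ε)| ≤ r := by rw [abs_le]; push_neg; intro h'; linarith
          have c3 : ¬ |x - 3*ε| ≤ r := by rw [abs_le]; push_neg; intro h'; linarith
          rw [if_neg c1, if_neg c3, if_pos (abs_le.mpr h2)]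
          push_cast
          linarith
        · rw [if_neg h2]
          by_cases h1 : |x - (-ε)| ≤ r
          · rw [abs_le] at h1
            have c3 : ¬ |x - 3*ε| ≤ r := by rw [abs_le]; push_neg; intro h'; linarith
            rw [if_pos (abs_le.mpr h1), if_neg c3]
            push_cast
            linarith
          · rw [if_neg h1]
            push_cast [Nat.cast_sub (show 1 ≤ m by omega)]
            split <;> linarith
      linarith
    · rw [zero_sub, abs_neg, abs_of_pos (by linarith)]
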